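/- Any monoid automorphism ξ of E which fixes every element of G pointwise is the identity automorphism of E. -/

import Mathlib

/-- The monoid `M` of strictly order-preserving maps `ℚ → ℚ`
(self-embeddings of `(ℚ,<)`), a submonoid of `Tr(ℚ) = Function.End ℚ`. -/
def Mmon : Submonoid (Function.End ℚ) where
  carrier := {f | StrictMono f}
  mul_mem' := fun hf hg => hf.comp hg
  one_mem' := strictMono_id

/-- The monoid `E` of order-preserving maps `ℚ → ℚ` (endomorphisms of `(ℚ,≤)`),
a submonoid of `Tr(ℚ) = Function.End ℚ`. -/
def Emon : Submonoid (Function.End ℚ) where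
  carrier := {f | Monotone f}
  mul_mem' := fun hf hg => hf.comp hg
  one_mem' := monotone_id

namespace Cor34

/-- The constant map with value `q`, as an element of `Emon`. -/
def cmap (q : ℚ) : Emon := ⟨fun _ => q, monotone_const⟩

lemma cmap_injective : Function.Injective cmap := by
  intro a b h
  exact congrArg (fun f : Emon => (f : Function.End ℚ) 0) h

lemma mul_cmap (f : Emon) (q : ℚ) :
    f * cmap q = cmap ((f : Function.End ℚ) q) := by
  apply Subtype.ext; funext x; rfl

/-- Left-zero property. -/
def LZ (f : Emon) : Prop := ∀ g : Emon, f * g = f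

lemma lz_iff (f : Emon) : LZ f ↔ ∃ q, f = cmap q := by
  constructor
  · intro h
    refine ⟨(f : Function.End ℚ) 0, ?_⟩
    have := h (cmap 0)
    rw [mul_cmap] at this
    exact this.symm
  · rintro ⟨q, rfl⟩ g
    apply Subtype.ext; funext x; rfl

lemma lz_map (ξ : Emon ≃* Emon) (f : Emon) (h : LZ f) : LZ (ξ f) := by
  intro g
  have := congrArg ξ (h (ξ.symm g))
  rwa [map_mul, ξ.apply_symm_apply] at this

/-- An order automorphism fixing `(-∞, c]` and pushing `(c, ∞)` up. -/
def gmax (c : ℚ) : Emon :=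
  ⟨fun x => max x (2*x - c), monotone_id.max (fun a b h => by show 2*a - c ≤ 2*b - c; linarith)⟩

lemma gmax_bij (c : ℚ) : Function.Bijective ((gmax c : Emon) : Function.End ℚ) := by
  apply Function.bijective_iff_has_inverse.mpr
  refine ⟨fun x => min x ((x + c)/2), ?_, ?_⟩
  · intro x
    show min (max x (2*x - c)) ((max x (2*x - c) + c)/2) = x
    rcases le_total x c with h | h
    · rw [max_eq_left (by linarith), min_eq_left (by linarith)]
    · rw [max_eq_right (by linarith), min_eq_right (by linarith)]; ring
  · intro x
    show max (min x ((x + c)/2)) (2 * (min x ((x + c)/2)) - c) = x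
    rcases le_total x c with h | h
    · rw [min_eq_left (by linarith), max_eq_left (by linarith)]
    · rw [min_eq_right (by linarith), max_eq_right (by linarith)]; ring

/-- An order automorphism fixing `[c, ∞)` and pushing `(-∞, c)` down. -/
def gmin (c : ℚ) : Emon :=
  ⟨fun x => min x (2*x - c), monotone_id.min (fun a b h => by show 2*a - c ≤ 2*b - c; linarith)⟩

lemma gmin_bij (c : ℚ) : Function.Bijective ((gmin c : Emon) : Function.End ℚ) := by
  apply Function.bijective_iff_has_inverse.mpr
  refine ⟨fun x => max x ((x + c)/2), ?_, ?_⟩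
  · intro x
    show max (min x (2*x - c)) ((min x (2*x - c) + c)/2) = x
    rcases le_total c x with h | h
    · rw [min_eq_left (by linarith), max_eq_left (by linarith)]
    · rw [min_eq_right (by linarith), max_eq_right (by linarith)]; ring
  · intro x
    show min (max x ((x + c)/2)) (2 * (max x ((x + c)/2)) - c) = x
    rcases le_total c x with h | h
    · rw [max_eq_left (by linarith), min_eq_left (by linarith)]
    · rw [max_eq_right (by linarith), min_eq_right (by linarith)]; ring

end Cor34

open Cor34 in
/-- **Corollary 3.4.** Any monoid automorphism `ξ` of `E = End(ℚ,≤)` which fixes every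
element of `G = Aut(ℚ,<)` (the invertible members of `E`) pointwise is the identity. -/
theorem automorphism_of_E_fixing_G_is_id (ξ : Emon ≃* Emon)
    (hfix : ∀ f : Emon, Function.Bijective (f : Function.End ℚ) → ξ f = f) :
    ∀ f : Emon, ξ f = f := by
  -- ξ fixes every constant map
  have hconst : ∀ q : ℚ, ξ (cmap q) = cmap q := by
    intro q
    obtain ⟨s, hs⟩ := (lz_iff _).mp
      (lz_map ξ (cmap q) ((lz_iff (cmap q)).mpr ⟨q, rfl⟩))
    -- commutation with a bijective g fixing q
    have key : ∀ g : Emon, Function.Bijective ((g : Emon) : Function.End ℚ) →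
        (g : Function.End ℚ) q = q → s = (g : Function.End ℚ) s := by
      intro g hbij hgq
      have h1 : ξ (g * cmap q) = cmap s := by
        rw [mul_cmap, hgq, hs]
      have h2 : ξ (g * cmap q) = cmap ((g : Function.End ℚ) s) := by
        rw [map_mul, hfix g hbij, hs, mul_cmap]
      exact cmap_injective (h1.symm.trans h2)
    have hsq : s = q := by
      rcases lt_trichotomy s q with h | h | h
      · have := key (gmin q) (gmin_bij q) (by
          show min q (2*q - q) = q
          rw [min_eq_left (by linarith)])
        have h2 : (gmin q : Function.End ℚ) s = 2*s - q := by
          show min s (2*s - q) = 2*s - q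
          rw [min_eq_right (by linarith)]
        rw [h2] at this; linarith
      · exact h
      · have := key (gmax q) (gmax_bij q) (by
          show max q (2*q - q) = q
          rw [max_eq_left (by linarith)])
        have h2 : (gmax q : Function.End ℚ) s = 2*s - q := by
          show max s (2*s - q) = 2*s - q
          rw [max_eq_right (by linarith)]
        rw [h2] at this; linarith
    rw [hs, hsq]
  -- conclude pointwise
  intro f
  apply Subtype.ext; funext q
  have h1 : ξ (f * cmap q) = cmap ((f : Function.End ℚ) q) := by
    rw [mul_cmap, hconst]
  have h2 : ξ (f * cmap q) = cmap (((ξ f : Emon) : Function.End ℚ) q) := by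
    rw [map_mul, hconst, mul_cmap]
  exact congrArg (fun h : Emon => (h : Function.End ℚ) 0) (h2.symm.trans h1)
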